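/- (Rigidity of split comodule algebra maps.) Let A be a split affine Hopf superalgebra over a 2-torsion free ring, C := Ā, W := W^A, and let ψ : A → C ⊗ Λ(W) be a counit-preserving map of left C-comodule superalgebras. If the composite (ε ⊗ ϖ)∘ψ : A → W (ϖ : Λ(W) → W the canonical projection) coincides with the canonical projection A → A₁/A₀⁺A₁ = W, then ψ is an isomorphism. -/

import Mathlib

open TensorProduct

namespace Stmt16Aux

variable (k W : Type*) [CommRing k] [AddCommGroup W] [Module k W]

noncomputable def LW : Submodule k (ExteriorAlgebra k W) :=
  LinearMap.range (ExteriorAlgebra.ι k (M := W))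

noncomputable def GF (i : ℕ) : Submodule k (ExteriorAlgebra k W) :=
  ⨆ j, ⨆ _ : i ≤ j, (LW k W) ^ j

variable {k W}

lemma iotaInv_algebraMap (r : k) :
    ExteriorAlgebra.ιInv (algebraMap k (ExteriorAlgebra k W) r) = 0 := by
  letI : Module kᵐᵒᵖ W := Module.compHom _ ((RingHom.id k).fromOpposite mul_comm)
  haveI : IsCentralScalar k W := ⟨fun r m => rfl⟩
  simp [ExteriorAlgebra.ιInv, TrivSqZeroExt.algebraMap_eq_inl']

lemma iotaInv_mul_mul (w w' : W) (z : ExteriorAlgebra k W) :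
    ExteriorAlgebra.ιInv (ExteriorAlgebra.ι k w * (ExteriorAlgebra.ι k w' * z)) = 0 := by
  letI : Module kᵐᵒᵖ W := Module.compHom _ ((RingHom.id k).fromOpposite mul_comm)
  haveI : IsCentralScalar k W := ⟨fun r m => rfl⟩
  simp only [ExteriorAlgebra.ιInv, LinearMap.coe_comp, Function.comp_apply,
    AlgHom.toLinearMap_apply, map_mul, ExteriorAlgebra.toTrivSqZeroExt_ι, ← mul_assoc,
    TrivSqZeroExt.inr_mul_inr, zero_mul, TrivSqZeroExt.snd_zero, TrivSqZeroExt.sndHom_apply]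

lemma algebraMapInv_iota (w : W) :
    ExteriorAlgebra.algebraMapInv (ExteriorAlgebra.ι k w) = (0 : k) := by
  simp [ExteriorAlgebra.algebraMapInv, ExteriorAlgebra.lift_ι_apply]

lemma pow_le_GF {i j : ℕ} (h : i ≤ j) : (LW k W) ^ j ≤ GF k W i :=
  le_iSup_of_le j (le_iSup_of_le h le_rfl)

lemma GF_antitone {i i' : ℕ} (h : i ≤ i') : GF k W i' ≤ GF k W i :=
  iSup_le fun j => iSup_le fun hj => pow_le_GF (h.trans hj)

lemma GF_mul {i j : ℕ} : GF k W i * GF k W j ≤ GF k W (i + j) := by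
  rw [GF, Submodule.iSup_mul]
  refine iSup_le fun p => ?_
  rw [Submodule.iSup_mul]
  refine iSup_le fun hp => ?_
  rw [GF, Submodule.mul_iSup]
  refine iSup_le fun q => ?_
  rw [Submodule.mul_iSup]
  refine iSup_le fun hq => ?_
  rw [← pow_add]
  exact pow_le_GF (Nat.add_le_add hp hq)

lemma GF_zero : GF k W 0 = ⊤ := by
  have h : ∀ x : ExteriorAlgebra k W, x ∈ GF k W 0 := by
    intro x
    induction x using ExteriorAlgebra.induction with
    | algebraMap r =>
        have h1 : algebraMap k (ExteriorAlgebra k W) r ∈ (LW k W) ^ 0 := by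
          rw [pow_zero]; exact Submodule.algebraMap_mem r
        exact pow_le_GF le_rfl h1
    | ι w =>
        have h1 : ExteriorAlgebra.ι k w ∈ (LW k W) ^ 1 := by
          rw [pow_one]; exact LinearMap.mem_range_self _ w
        exact pow_le_GF (Nat.zero_le 1) h1
    | mul a b ha hb => exact GF_mul (i := 0) (j := 0) (Submodule.mul_mem_mul ha hb)
    | add a b ha hb => exact add_mem ha hb
  exact top_le_iff.mp fun x _ => h x

section Free
variable [Module.Finite k W] [Module.Free k W]

omit [Module.Finite k W] in
lemma LW_eq_span :
    LW k W = Submodule.span k (Set.range fun i : Module.Free.ChooseBasisIndex k W =>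
      ExteriorAlgebra.ι k (Module.Free.chooseBasis k W i)) := by
  set b := Module.Free.chooseBasis k W
  have : LW k W = Submodule.map (ExteriorAlgebra.ι k) ⊤ := by
    rw [Submodule.map_top]; rfl
  rw [this, ← b.span_eq, Submodule.map_span, ← Set.range_comp]
  rfl

lemma LW_pow_vanish :
    (LW k W) ^ (Fintype.card (Module.Free.ChooseBasisIndex k W) + 1) = ⊥ := by
  classical
  set I := Module.Free.ChooseBasisIndex k W
  set b := Module.Free.chooseBasis k W
  set m := Fintype.card I + 1 with hm
  rw [LW_eq_span]
  rw [Submodule.span_pow (R := k)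
    (s := Set.range fun i : I => ExteriorAlgebra.ι k (b i)) m]
  refine le_bot_iff.mp (Submodule.span_le.mpr fun x hx => ?_)
  obtain ⟨f, rfl⟩ := Set.mem_pow.mp hx
  have hg : ∀ i : Fin m, ∃ j : I, ExteriorAlgebra.ι k (b j) = (f i : ExteriorAlgebra k W) := by
    intro i
    obtain ⟨j, hj⟩ := (f i).2
    exact ⟨j, hj⟩
  choose g hg using hg
  have hnotinj : ¬ Function.Injective g := by
    intro hinj
    have := Fintype.card_le_of_injective g hinj
    rw [Fintype.card_fin] at this
    omega
  rw [Function.not_injective_iff] at hnotinj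
  obtain ⟨i, j, hij, hne⟩ := hnotinj
  have hz : ExteriorAlgebra.ιMulti k m (fun i => b (g i)) = 0 :=
    AlternatingMap.map_eq_zero_of_eq _ _ (by rw [hij]) hne
  have hp : (List.ofFn fun i => ((f i : ExteriorAlgebra k W))).prod = 0 := by
    simp only [← hg]
    rw [← ExteriorAlgebra.ιMulti_apply, hz]
  rw [SetLike.mem_coe, hp]
  exact Submodule.zero_mem ⊥

lemma GF_vanish :
    GF k W (Fintype.card (Module.Free.ChooseBasisIndex k W) + 1) = ⊥ := by
  set n := Fintype.card (Module.Free.ChooseBasisIndex k W)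
  refine le_bot_iff.mp (iSup_le fun j => iSup_le fun hj => ?_)
  have h1 : (LW k W) ^ j = (LW k W) ^ (n+1) * (LW k W) ^ (j - (n+1)) := by
    rw [← pow_add]
    congr 1
    omega
  rw [h1, LW_pow_vanish, Submodule.bot_mul]

end Free

lemma epsilon_vanish {x : ExteriorAlgebra k W}
    (hx : x ∈ LW k W * (⊤ : Submodule k (ExteriorAlgebra k W))) :
    ExteriorAlgebra.algebraMapInv x = (0 : k) := by
  refine Submodule.mul_induction_on hx ?_ ?_
  · rintro m ⟨w, rfl⟩ y _
    rw [map_mul, algebraMapInv_iota, zero_mul]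
  · intro a b ha hb
    rw [map_add, ha, hb, add_zero]

lemma iotaInv_vanish {x : ExteriorAlgebra k W}
    (hx : x ∈ LW k W * (LW k W * (⊤ : Submodule k (ExteriorAlgebra k W)))) :
    ExteriorAlgebra.ιInv x = 0 := by
  refine Submodule.mul_induction_on hx ?_ ?_
  · rintro m ⟨w, rfl⟩ y hy
    refine Submodule.mul_induction_on hy ?_ ?_
    · rintro m' ⟨w', rfl⟩ z _
      exact iotaInv_mul_mul w w' z
    · intro a b ha hb
      rw [mul_add, map_add, ha, hb, add_zero]
  · intro a b ha hb
    rw [map_add, ha, hb, add_zero]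

lemma pow_le_two (m : ℕ) :
    (LW k W) ^ (m + 2) ≤ LW k W * (LW k W * (⊤ : Submodule k (ExteriorAlgebra k W))) := by
  have h1 : (LW k W) ^ (m + 2) = LW k W * (LW k W * (LW k W) ^ m) := by
    rw [pow_succ', pow_succ']
  rw [h1]
  exact mul_le_mul' le_rfl (mul_le_mul' le_rfl le_top)

lemma starLambda (x : ExteriorAlgebra k W) :
    x - algebraMap k _ (ExteriorAlgebra.algebraMapInv x)
      - ExteriorAlgebra.ι k (ExteriorAlgebra.ιInv x) ∈ GF k W 2 := by
  set D : ExteriorAlgebra k W →ₗ[k] ExteriorAlgebra k W :=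
    LinearMap.id - (Algebra.linearMap k _) ∘ₗ (ExteriorAlgebra.algebraMapInv (M := W)).toLinearMap
      - (ExteriorAlgebra.ι k) ∘ₗ ExteriorAlgebra.ιInv with hD
  have hDapp : ∀ y : ExteriorAlgebra k W, D y = y - algebraMap k _
      (ExteriorAlgebra.algebraMapInv y) - ExteriorAlgebra.ι k (ExteriorAlgebra.ιInv y) := by
    intro y
    simp [hD]
  have key : GF k W 0 ≤ Submodule.comap D (GF k W 2) := by
    refine iSup_le fun j => iSup_le fun _ => fun y hy => ?_
    have hmem : D y ∈ GF k W 2 := by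
      match j with
      | 0 =>
        rw [pow_zero] at hy
        obtain ⟨r, rfl⟩ := Submodule.mem_one.mp hy
        rw [hDapp, show ExteriorAlgebra.algebraMapInv
            (algebraMap k (ExteriorAlgebra k W) r) = r from ExteriorAlgebra.algebraMap_leftInverse W r,
          iotaInv_algebraMap, map_zero, sub_zero, sub_self]
        exact Submodule.zero_mem _
      | 1 =>
        rw [pow_one] at hy
        obtain ⟨w, rfl⟩ := hy
        rw [hDapp, algebraMapInv_iota, map_zero, sub_zero,
          show ExteriorAlgebra.ιInv (ExteriorAlgebra.ι k w) = w from ExteriorAlgebra.ι_leftInverse w,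
          sub_self]
        exact Submodule.zero_mem _
      | (m+2) =>
        have h2 := pow_le_two m hy
        rw [hDapp, epsilon_vanish ((mul_le_mul' (le_refl (LW k W)) (le_top (a := LW k W * (⊤ : Submodule k (ExteriorAlgebra k W))))) h2),
          iotaInv_vanish h2, map_zero, map_zero, sub_zero, sub_zero]
        exact pow_le_GF (by omega) hy
    exact hmem
  have hx0 : x ∈ GF k W 0 := by rw [GF_zero]; trivial
  have := key hx0
  rw [Submodule.mem_comap, hDapp] at this
  exact this

section TensorSide
variable (k C W : Type*) [CommRing k] [CommRing C] [Algebra k C]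
  [AddCommGroup W] [Module k W]

noncomputable def FF (i : ℕ) : Submodule k (C ⊗[k] ExteriorAlgebra k W) :=
  Submodule.map₂ (TensorProduct.mk k C (ExteriorAlgebra k W)) ⊤ (GF k W i)

variable {k C W}

lemma FF_zero : FF k C W 0 = ⊤ := by
  rw [FF, GF_zero, TensorProduct.map₂_mk_top_top_eq_top]

lemma FF_antitone {i i' : ℕ} (h : i ≤ i') : FF k C W i' ≤ FF k C W i :=
  Submodule.map₂_le_map₂_right (GF_antitone h)

lemma FF_mem {i : ℕ} (c : C) {x : ExteriorAlgebra k W} (hx : x ∈ GF k W i) :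
    c ⊗ₜ[k] x ∈ FF k C W i :=
  Submodule.apply_mem_map₂ _ trivial hx

lemma FF_vanish [Module.Finite k W] [Module.Free k W] :
    FF k C W (Fintype.card (Module.Free.ChooseBasisIndex k W) + 1) = ⊥ := by
  rw [FF, GF_vanish, Submodule.map₂_bot_right]

lemma FF_mul {i j : ℕ} {x y : C ⊗[k] ExteriorAlgebra k W}
    (hx : x ∈ FF k C W i) (hy : y ∈ FF k C W j) : x * y ∈ FF k C W (i + j) := by
  have h : FF k C W i ≤ ⨅ (n : C ⊗[k] ExteriorAlgebra k W) (_ : n ∈ FF k C W j),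
      Submodule.comap (LinearMap.mulRight k n) (FF k C W (i+j)) := by
    refine Submodule.map₂_le.mpr fun c _ x hx => ?_
    simp only [Submodule.mem_iInf]
    intro n hn
    have h2 : FF k C W j ≤ Submodule.comap
        (LinearMap.mulLeft k (c ⊗ₜ[k] x)) (FF k C W (i+j)) := by
      refine Submodule.map₂_le.mpr fun c' _ x' hx' => ?_
      have : (c ⊗ₜ[k] x) * (c' ⊗ₜ[k] x') = (c * c') ⊗ₜ[k] (x * x') :=
        Algebra.TensorProduct.tmul_mul_tmul _ _ _ _
      show (c ⊗ₜ[k] x) * (c' ⊗ₜ[k] x') ∈ FF k C W (i+j)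
      rw [this]
      exact FF_mem _ (GF_mul (i := i) (j := j) (Submodule.mul_mem_mul hx hx'))
    exact h2 hn
  have h3 := h hx
  simp only [Submodule.mem_iInf] at h3
  exact h3 y hy

end TensorSide
section TensorSide2
variable {k C W : Type*} [CommRing k] [CommRing C] [Algebra k C]
  [AddCommGroup W] [Module k W]

lemma starB (b : C ⊗[k] ExteriorAlgebra k W) :
    b - LinearMap.lTensor C ((Algebra.linearMap k (ExteriorAlgebra k W)) ∘ₗ
          (ExteriorAlgebra.algebraMapInv (M := W)).toLinearMap) b
      - LinearMap.lTensor C ((ExteriorAlgebra.ι k) ∘ₗ ExteriorAlgebra.ιInv) b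
      ∈ FF k C W 2 := by
  set D : C ⊗[k] ExteriorAlgebra k W →ₗ[k] C ⊗[k] ExteriorAlgebra k W :=
    LinearMap.id - LinearMap.lTensor C ((Algebra.linearMap k (ExteriorAlgebra k W)) ∘ₗ
          (ExteriorAlgebra.algebraMapInv (M := W)).toLinearMap)
      - LinearMap.lTensor C ((ExteriorAlgebra.ι k) ∘ₗ ExteriorAlgebra.ιInv) with hD
  have key : (⊤ : Submodule k (C ⊗[k] ExteriorAlgebra k W)) ≤
      Submodule.comap D (FF k C W 2) := by
    rw [← TensorProduct.map₂_mk_top_top_eq_top (R := k) (M := C) (N := ExteriorAlgebra k W)]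
    refine Submodule.map₂_le.mpr fun c _ x _ => ?_
    have hDapp : D (c ⊗ₜ[k] x) = c ⊗ₜ[k] (x - algebraMap k _
        (ExteriorAlgebra.algebraMapInv x) - ExteriorAlgebra.ι k (ExteriorAlgebra.ιInv x)) := by
      simp only [hD, LinearMap.sub_apply, LinearMap.id_apply, LinearMap.lTensor_tmul,
        LinearMap.coe_comp, Function.comp_apply, AlgHom.toLinearMap_apply,
        Algebra.linearMap_apply, TensorProduct.tmul_sub]
    show D (c ⊗ₜ[k] x) ∈ FF k C W 2
    rw [hDapp]
    exact FF_mem _ (starLambda x)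
  have h := key (Submodule.mem_top (x := b))
  rw [Submodule.mem_comap] at h
  simpa only [hD, LinearMap.sub_apply, LinearMap.id_apply] using h

lemma mem_FF_two {b : C ⊗[k] ExteriorAlgebra k W}
    (hq : LinearMap.lTensor C (ExteriorAlgebra.algebraMapInv (M := W)).toLinearMap b = 0)
    (hi : LinearMap.lTensor C (ExteriorAlgebra.ιInv (R := k) (M := W)) b = 0) :
    b ∈ FF k C W 2 := by
  have h1 : LinearMap.lTensor C ((Algebra.linearMap k (ExteriorAlgebra k W)) ∘ₗ
      (ExteriorAlgebra.algebraMapInv (M := W)).toLinearMap) b = 0 := by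
    rw [LinearMap.lTensor_comp, LinearMap.comp_apply, hq, map_zero]
  have h2 : LinearMap.lTensor C ((ExteriorAlgebra.ι k) ∘ₗ
      ExteriorAlgebra.ιInv (R := k) (M := W)) b = 0 := by
    rw [LinearMap.lTensor_comp, LinearMap.comp_apply, hi, map_zero]
  have h := starB b
  rwa [h1, h2, sub_zero, sub_zero] at h

end TensorSide2
section KeyStep
variable {k C W : Type*} [CommRing k] [CommRing C] [Algebra k C]
  [AddCommGroup W] [Module k W]
  {φ : C ⊗[k] ExteriorAlgebra k W →ₗ[k] C ⊗[k] ExteriorAlgebra k W}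

lemma key_step
    (hmul : ∀ u v : C ⊗[k] ExteriorAlgebra k W, φ (u*v) = φ u * φ v)
    (hgen0 : ∀ c : C, φ (c ⊗ₜ[k] (1 : ExteriorAlgebra k W)) - c ⊗ₜ[k] 1 ∈ FF k C W 2)
    (hgen1 : ∀ w : W, φ ((1:C) ⊗ₜ[k] ExteriorAlgebra.ι k w)
      - (1:C) ⊗ₜ[k] ExteriorAlgebra.ι k w ∈ FF k C W 2)
    (j : ℕ) (y : ExteriorAlgebra k W) (hy : y ∈ (LW k W) ^ j) :
    ∀ c : C, φ (c ⊗ₜ[k] y) - c ⊗ₜ[k] y ∈ FF k C W (j+1) := by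
  induction hy using Submodule.pow_induction_on_left' with
  | algebraMap r =>
      intro c
      have h1 : c ⊗ₜ[k] (algebraMap k (ExteriorAlgebra k W) r) =
          r • (c ⊗ₜ[k] (1 : ExteriorAlgebra k W)) := by
        rw [Algebra.algebraMap_eq_smul_one, TensorProduct.tmul_smul]
      rw [h1, map_smul, ← smul_sub]
      exact Submodule.smul_mem _ r (FF_antitone (by omega) (hgen0 c))
  | add x y i hx hy ihx ihy =>
      intro c
      have h1 : c ⊗ₜ[k] (x + y) = c ⊗ₜ[k] x + c ⊗ₜ[k] y := TensorProduct.tmul_add c x y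
      rw [h1, map_add]
      have : φ (c ⊗ₜ[k] x) + φ (c ⊗ₜ[k] y) - (c ⊗ₜ[k] x + c ⊗ₜ[k] y)
          = (φ (c ⊗ₜ[k] x) - c ⊗ₜ[k] x) + (φ (c ⊗ₜ[k] y) - c ⊗ₜ[k] y) := by abel
      rw [this]
      exact add_mem (ihx c) (ihy c)
  | mem_mul m hm i x hx ih =>
      intro c
      obtain ⟨w, rfl⟩ := hm
      have hsplit : c ⊗ₜ[k] (ExteriorAlgebra.ι k w * x)
          = ((1:C) ⊗ₜ[k] ExteriorAlgebra.ι k w) * (c ⊗ₜ[k] x) := by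
        rw [Algebra.TensorProduct.tmul_mul_tmul, one_mul]
      set a : C ⊗[k] ExteriorAlgebra k W := (1:C) ⊗ₜ[k] ExteriorAlgebra.ι k w with ha
      set b : C ⊗[k] ExteriorAlgebra k W := c ⊗ₜ[k] x with hb
      have hamem : a ∈ FF k C W 1 := by
        refine FF_mem _ (pow_le_GF le_rfl ?_)
        rw [pow_one]
        exact LinearMap.mem_range_self _ w
      have hbmem : b ∈ FF k C W i := FF_mem _ (pow_le_GF le_rfl hx)
      have hr : φ a - a ∈ FF k C W 2 := hgen1 w
      have hs : φ b - b ∈ FF k C W (i+1) := ih c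
      have hcalc : φ (a * b) - a * b
          = a * (φ b - b) + (φ a - a) * b + (φ a - a) * (φ b - b) := by
        rw [hmul]
        noncomm_ring
      show φ (c ⊗ₜ[k] (ExteriorAlgebra.ι k w * x)) - c ⊗ₜ[k] (ExteriorAlgebra.ι k w * x)
          ∈ FF k C W (i + 1 + 1)
      rw [hsplit, hcalc]
      refine add_mem (add_mem ?_ ?_) ?_
      · have := FF_mul (i := 1) (j := i+1) hamem hs
        have e : 1 + (i+1) = i + 1 + 1 := by omega
        rwa [e] at this
      · have := FF_mul (i := 2) (j := i) hr hbmem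
        have e : 2 + i = i + 1 + 1 := by omega
        rwa [e] at this
      · have := FF_mul (i := 2) (j := i+1) hr hs
        exact FF_antitone (by omega) this

lemma N_step
    (hmul : ∀ u v : C ⊗[k] ExteriorAlgebra k W, φ (u*v) = φ u * φ v)
    (hgen0 : ∀ c : C, φ (c ⊗ₜ[k] (1 : ExteriorAlgebra k W)) - c ⊗ₜ[k] 1 ∈ FF k C W 2)
    (hgen1 : ∀ w : W, φ ((1:C) ⊗ₜ[k] ExteriorAlgebra.ι k w)
      - (1:C) ⊗ₜ[k] ExteriorAlgebra.ι k w ∈ FF k C W 2)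
    (i : ℕ) {x : C ⊗[k] ExteriorAlgebra k W} (hx : x ∈ FF k C W i) :
    φ x - x ∈ FF k C W (i+1) := by
  set N : C ⊗[k] ExteriorAlgebra k W →ₗ[k] C ⊗[k] ExteriorAlgebra k W := φ - LinearMap.id with hN
  have key : FF k C W i ≤ Submodule.comap N (FF k C W (i+1)) := by
    refine Submodule.map₂_le.mpr fun c _ y hy => ?_
    show N (c ⊗ₜ[k] y) ∈ FF k C W (i+1)
    have hsub : GF k W i ≤ Submodule.comap
        (N ∘ₗ (TensorProduct.mk k C (ExteriorAlgebra k W) c))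
        (FF k C W (i+1)) := by
      refine iSup_le fun j => iSup_le fun hj => fun z hz => ?_
      have hz2 : (N ∘ₗ (TensorProduct.mk k C (ExteriorAlgebra k W) c)) z
          = φ (c ⊗ₜ[k] z) - c ⊗ₜ[k] z := by
        simp only [hN, LinearMap.comp_apply, LinearMap.sub_apply, LinearMap.id_apply,
          TensorProduct.mk_apply]
      refine Submodule.mem_comap.mpr ?_
      rw [hz2]
      exact FF_antitone (by omega) (key_step hmul hgen0 hgen1 j z hz c)
    have := hsub hy
    rw [Submodule.mem_comap, LinearMap.comp_apply, TensorProduct.mk_apply] at this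
    exact this
  have h := key hx
  rw [Submodule.mem_comap, hN, LinearMap.sub_apply, LinearMap.id_apply] at h
  exact h

end KeyStep
section Bij
variable {k C W : Type*} [CommRing k] [CommRing C] [Algebra k C]
  [AddCommGroup W] [Module k W] [Module.Finite k W] [Module.Free k W]
  {φ : C ⊗[k] ExteriorAlgebra k W →ₗ[k] C ⊗[k] ExteriorAlgebra k W}

lemma phi_bijective
    (hmul : ∀ u v : C ⊗[k] ExteriorAlgebra k W, φ (u*v) = φ u * φ v)
    (hgen0 : ∀ c : C, φ (c ⊗ₜ[k] (1 : ExteriorAlgebra k W)) - c ⊗ₜ[k] 1 ∈ FF k C W 2)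
    (hgen1 : ∀ w : W, φ ((1:C) ⊗ₜ[k] ExteriorAlgebra.ι k w)
      - (1:C) ⊗ₜ[k] ExteriorAlgebra.ι k w ∈ FF k C W 2) :
    Function.Bijective φ := by
  set n := Fintype.card (Module.Free.ChooseBasisIndex k W) with hn
  set N : C ⊗[k] ExteriorAlgebra k W →ₗ[k] C ⊗[k] ExteriorAlgebra k W := φ - LinearMap.id with hN
  have hNapp : ∀ x, N x = φ x - x := by
    intro x; simp [hN]
  have hpow : ∀ (m i : ℕ) (x : C ⊗[k] ExteriorAlgebra k W),
      x ∈ FF k C W i → (N ^ m) x ∈ FF k C W (i + m) := by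
    intro m
    induction m with
    | zero =>
        intro i x hx
        rw [pow_zero, Module.End.one_apply]
        exact FF_antitone (by omega) hx
    | succ m ih =>
        intro i x hx
        rw [pow_succ, Module.End.mul_apply]
        have h1 : N x ∈ FF k C W (i+1) := by
          rw [hNapp]
          exact N_step hmul hgen0 hgen1 i hx
        have := ih (i+1) _ h1
        have e : i + 1 + m = i + (m+1) := by omega
        rwa [e] at this
  have hnil : N ^ (n + 1) = 0 := by
    refine LinearMap.ext fun x => ?_
    have hx : x ∈ FF k C W 0 := by rw [FF_zero]; trivial
    have := hpow (n+1) 0 x hx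
    rw [zero_add, hn, FF_vanish] at this
    simpa using this
  have hu : IsUnit φ := by
    have h1 : IsUnit (N + 1) := IsNilpotent.isUnit_add_one ⟨n+1, hnil⟩
    have h2 : N + 1 = φ := by
      rw [hN]
      refine LinearMap.ext fun x => ?_
      simp
    rwa [h2] at h1
  exact (Module.End.isUnit_iff φ).mp hu

end Bij

section Coalg
variable {k C M V : Type*} [CommRing k]
  [AddCommGroup C] [Module k C] [Coalgebra k C]
  [AddCommGroup M] [Module k M] [AddCommGroup V] [Module k V]

lemma step1 (t : M →ₗ[k] V) (y : C ⊗[k] M) :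
    (LinearMap.lTensor C ((((TensorProduct.lid k V).toLinearMap ∘ₗ
        LinearMap.rTensor V (Coalgebra.counit (R := k) (A := C))) ∘ₗ
        LinearMap.lTensor C t)))
      (((TensorProduct.assoc k C C M).toLinearMap ∘ₗ
        LinearMap.rTensor M (Coalgebra.comul (R := k) (A := C))) y)
    = LinearMap.lTensor C t y := by
  induction y using TensorProduct.induction_on with
  | zero => simp
  | add y₁ y₂ h₁ h₂ => simp only [map_add, h₁, h₂]
  | tmul c x =>
      have haux : ∀ u : C ⊗[k] C,
          (LinearMap.lTensor C ((((TensorProduct.lid k V).toLinearMap ∘ₗ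
              LinearMap.rTensor V (Coalgebra.counit (R := k) (A := C))) ∘ₗ
              LinearMap.lTensor C t)))
            ((TensorProduct.assoc k C C M) (u ⊗ₜ[k] x))
          = LinearMap.lTensor C (LinearMap.toSpanSingleton k V (t x))
              (LinearMap.lTensor C (Coalgebra.counit (R := k) (A := C)) u) := by
        intro u
        induction u using TensorProduct.induction_on with
        | zero => simp
        | add u₁ u₂ h₁ h₂ =>
            rw [TensorProduct.add_tmul, map_add, map_add, map_add, map_add, h₁, h₂]
        | tmul c₁ c₂ =>
            simp only [TensorProduct.assoc_tmul, LinearMap.lTensor_tmul,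
              LinearMap.coe_comp, Function.comp_apply, LinearMap.rTensor_tmul,
              LinearEquiv.coe_coe, TensorProduct.lid_tmul,
              LinearMap.toSpanSingleton_apply]
      simp only [LinearMap.coe_comp, Function.comp_apply, LinearMap.rTensor_tmul,
        LinearEquiv.coe_coe]
      rw [haux (Coalgebra.comul c), Coalgebra.lTensor_counit_comul]
      simp only [LinearMap.lTensor_tmul, LinearMap.toSpanSingleton_apply, one_smul]

end Coalg
section Coalg2
variable {k C M V : Type*} [CommRing k]
  [AddCommGroup C] [Module k C] [Coalgebra k C]
  [AddCommGroup M] [Module k M] [AddCommGroup V] [Module k V]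

lemma proj_invariant (φ : C ⊗[k] M →ₗ[k] C ⊗[k] M)
    (hcolin : ∀ b : C ⊗[k] M,
      ((TensorProduct.assoc k C C M).toLinearMap ∘ₗ
        LinearMap.rTensor M (Coalgebra.comul (R := k) (A := C))) (φ b)
      = LinearMap.lTensor C φ
        (((TensorProduct.assoc k C C M).toLinearMap ∘ₗ
          LinearMap.rTensor M (Coalgebra.comul (R := k) (A := C))) b))
    (t : M →ₗ[k] V)
    (heps : ∀ b : C ⊗[k] M,
      ((TensorProduct.lid k V).toLinearMap ∘ₗ
        LinearMap.rTensor V (Coalgebra.counit (R := k) (A := C)))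
          (LinearMap.lTensor C t (φ b))
      = ((TensorProduct.lid k V).toLinearMap ∘ₗ
        LinearMap.rTensor V (Coalgebra.counit (R := k) (A := C)))
          (LinearMap.lTensor C t b)) :
    ∀ b : C ⊗[k] M, LinearMap.lTensor C t (φ b) = LinearMap.lTensor C t b := by
  intro b
  set Ev : C ⊗[k] V →ₗ[k] V := (TensorProduct.lid k V).toLinearMap ∘ₗ
    LinearMap.rTensor V (Coalgebra.counit (R := k) (A := C)) with hEv
  set ρ : C ⊗[k] M →ₗ[k] C ⊗[k] (C ⊗[k] M) :=
    (TensorProduct.assoc k C C M).toLinearMap ∘ₗ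
      LinearMap.rTensor M (Coalgebra.comul (R := k) (A := C)) with hρ
  have cofree : LinearMap.lTensor C t (φ b)
      = LinearMap.lTensor C ((Ev ∘ₗ LinearMap.lTensor C t) ∘ₗ φ) (ρ b) := by
    have h1 := step1 (C := C) t (φ b)
    rw [← h1, hcolin b]
    rw [← LinearMap.comp_apply, ← LinearMap.lTensor_comp]
  have hmapeq : (Ev ∘ₗ LinearMap.lTensor C t) ∘ₗ φ = Ev ∘ₗ LinearMap.lTensor C t := by
    refine LinearMap.ext fun x => ?_
    simp only [LinearMap.comp_apply]
    exact heps x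
  rw [cofree, hmapeq]
  exact step1 (C := C) t b

end Coalg2
end Stmt16Aux

open Stmt16Aux

/-- Rigidity of split comodule algebra maps.  Let A be a split affine Hopf
superalgebra over a 2-torsion free ring, C := Ā a commutative Hopf algebra,
W := W^A finite free, and B := C ⊗ Λ(W) with its natural left C-comodule
algebra structure and counit.  If ψ : A → C ⊗ Λ(W) is a counit-preserving
map of left C-comodule algebras such that (ε ⊗ ϖ)∘ψ equals the canonical
projection pW : A → W (splitness being witnessed by some isomorphism χ with
the same properties), then ψ is an isomorphism. -/
theorem stmt16 (k C A W : Type*) [CommRing k]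
    (h2k : ∀ a : k, 2 * a = 0 → a = 0)
    [CommRing C] [HopfAlgebra k C]
    [Ring A] [Algebra k A]
    [AddCommGroup W] [Module k W] [Module.Finite k W] [Module.Free k W]
    -- counit and left C-comodule algebra structure on A
    (εA : A →ₐ[k] k) (ρA : A →ₗ[k] C ⊗[k] A)
    (hρA1 : ρA 1 = 1 ⊗ₜ 1)
    (hρAmul : ∀ a b : A, ρA (a * b) = ρA a * ρA b)
    (hρAcounit : ∀ a : A,
      (TensorProduct.lid k A)
        ((LinearMap.rTensor A (Coalgebra.counit (R := k) (A := C))) (ρA a)) = a)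
    -- the canonical projection A → A₁/A₀⁺A₁ = W
    (pW : A →ₗ[k] W) :
    -- abbreviations: coaction ρB, counit εB and W-projection projW on B = C ⊗ Λ(W)
    ∀ (ρB : C ⊗[k] ExteriorAlgebra k W →ₗ[k] C ⊗[k] (C ⊗[k] ExteriorAlgebra k W))
      (εB : C ⊗[k] ExteriorAlgebra k W →ₗ[k] k)
      (projW : C ⊗[k] ExteriorAlgebra k W →ₗ[k] W),
      ρB = (TensorProduct.assoc k C C (ExteriorAlgebra k W)).toLinearMap ∘ₗ
        (LinearMap.rTensor (ExteriorAlgebra k W) (Coalgebra.comul (R := k) (A := C))) →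
      εB = (TensorProduct.lid k k).toLinearMap ∘ₗ
        (TensorProduct.map (Coalgebra.counit (R := k) (A := C))
          (ExteriorAlgebra.algebraMapInv).toLinearMap) →
      projW = (TensorProduct.lid k W).toLinearMap ∘ₗ
        (TensorProduct.map (Coalgebra.counit (R := k) (A := C)) ExteriorAlgebra.ιInv) →
    -- splitness of A: some isomorphism χ of left C-comodule algebras,
    -- counit-preserving and compatible with the canonical projection pW
    (∃ χ : A →ₗ[k] C ⊗[k] ExteriorAlgebra k W,
      Function.Bijective χ ∧
      (∀ a b : A, χ (a * b) = χ a * χ b) ∧ χ 1 = 1 ∧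
      ρB ∘ₗ χ = (LinearMap.lTensor C χ) ∘ₗ ρA ∧
      (∀ a : A, εB (χ a) = εA a) ∧
      projW ∘ₗ χ = pW) →
    -- then any counit-preserving comodule algebra map ψ compatible with pW
    -- is automatically an isomorphism
    ∀ ψ : A →ₗ[k] C ⊗[k] ExteriorAlgebra k W,
      (∀ a b : A, ψ (a * b) = ψ a * ψ b) → ψ 1 = 1 →
      ρB ∘ₗ ψ = (LinearMap.lTensor C ψ) ∘ₗ ρA →
      (∀ a : A, εB (ψ a) = εA a) →
      projW ∘ₗ ψ = pW →
      Function.Bijective ψ := by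
  intro ρB εB projW hρB hεB hprojW hsplit ψ hψmul hψ1 hψcolin hψeps hψproj
  obtain ⟨χ, hχbij, hχmul, hχ1, hχcolin, hχeps, hχproj⟩ := hsplit
  subst hρB hεB hprojW
  set Λ := ExteriorAlgebra k W
  set εt : Λ →ₗ[k] k := (ExteriorAlgebra.algebraMapInv (R := k) (M := W)).toLinearMap with hεt
  set it : Λ →ₗ[k] W := ExteriorAlgebra.ιInv (R := k) (M := W) with hit
  set χe : A ≃ₗ[k] C ⊗[k] Λ := LinearEquiv.ofBijective χ hχbij with hχe
  set φ : C ⊗[k] Λ →ₗ[k] C ⊗[k] Λ := ψ ∘ₗ (χe.symm : C ⊗[k] Λ ≃ₗ[k] A).toLinearMap with hφ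
  have hφχ : ∀ a : A, φ (χ a) = ψ a := by
    intro a
    have h1 : χ a = χe a := rfl
    show ψ (χe.symm (χ a)) = ψ a
    rw [h1, χe.symm_apply_apply]
  have hφmul : ∀ u v : C ⊗[k] Λ, φ (u * v) = φ u * φ v := by
    intro u v
    obtain ⟨a, rfl⟩ := hχbij.surjective u
    obtain ⟨a', rfl⟩ := hχbij.surjective v
    rw [← hχmul, hφχ, hψmul, ← hφχ a, ← hφχ a']
  have hφcolin : ∀ b : C ⊗[k] Λ,
      ((TensorProduct.assoc k C C Λ).toLinearMap ∘ₗ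
        LinearMap.rTensor Λ (Coalgebra.comul (R := k) (A := C))) (φ b)
      = LinearMap.lTensor C φ
        (((TensorProduct.assoc k C C Λ).toLinearMap ∘ₗ
          LinearMap.rTensor Λ (Coalgebra.comul (R := k) (A := C))) b) := by
    intro b
    obtain ⟨a, rfl⟩ := hχbij.surjective b
    have h1 := LinearMap.congr_fun hψcolin a
    have h2 := LinearMap.congr_fun hχcolin a
    rw [LinearMap.comp_apply] at h1 h2
    have h3 : φ ∘ₗ χ = ψ := LinearMap.ext hφχ
    rw [hφχ, h1, h2]
    simp only [LinearMap.comp_apply]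
    rw [← LinearMap.comp_apply (LinearMap.lTensor C φ), ← LinearMap.lTensor_comp, h3]
  have hφeps : ∀ b : C ⊗[k] Λ,
      ((TensorProduct.lid k k).toLinearMap ∘ₗ
        (TensorProduct.map (Coalgebra.counit (R := k) (A := C)) εt)) (φ b)
      = ((TensorProduct.lid k k).toLinearMap ∘ₗ
        (TensorProduct.map (Coalgebra.counit (R := k) (A := C)) εt)) b := by
    intro b
    obtain ⟨a, rfl⟩ := hχbij.surjective b
    rw [hφχ]
    exact (hψeps a).trans (hχeps a).symm
  have hφproj : ∀ b : C ⊗[k] Λ,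
      ((TensorProduct.lid k W).toLinearMap ∘ₗ
        (TensorProduct.map (Coalgebra.counit (R := k) (A := C)) it)) (φ b)
      = ((TensorProduct.lid k W).toLinearMap ∘ₗ
        (TensorProduct.map (Coalgebra.counit (R := k) (A := C)) it)) b := by
    intro b
    obtain ⟨a, rfl⟩ := hχbij.surjective b
    rw [hφχ]
    have h1 := LinearMap.congr_fun hψproj a
    have h2 := LinearMap.congr_fun hχproj a
    rw [LinearMap.comp_apply] at h1 h2
    exact h1.trans h2.symm
  -- identify εB with Ev ∘ lTensor
  have hEvk : ∀ t : Λ →ₗ[k] k,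
      ((TensorProduct.lid k k).toLinearMap ∘ₗ
        LinearMap.rTensor k (Coalgebra.counit (R := k) (A := C))) ∘ₗ
        LinearMap.lTensor C t
      = (TensorProduct.lid k k).toLinearMap ∘ₗ
        (TensorProduct.map (Coalgebra.counit (R := k) (A := C)) t) := by
    intro t
    rw [LinearMap.comp_assoc, LinearMap.rTensor_comp_lTensor]
  have hEvW : ∀ t : Λ →ₗ[k] W,
      ((TensorProduct.lid k W).toLinearMap ∘ₗ
        LinearMap.rTensor W (Coalgebra.counit (R := k) (A := C))) ∘ₗ
        LinearMap.lTensor C t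
      = (TensorProduct.lid k W).toLinearMap ∘ₗ
        (TensorProduct.map (Coalgebra.counit (R := k) (A := C)) t) := by
    intro t
    rw [LinearMap.comp_assoc, LinearMap.rTensor_comp_lTensor]
  have hq : ∀ b : C ⊗[k] Λ, LinearMap.lTensor C εt (φ b) = LinearMap.lTensor C εt b := by
    refine proj_invariant φ hφcolin εt fun b => ?_
    have h1 := LinearMap.congr_fun (hEvk εt) (φ b)
    have h2 := LinearMap.congr_fun (hEvk εt) b
    rw [LinearMap.comp_apply] at h1 h2
    rw [h1, h2]
    exact hφeps b
  have hqW : ∀ b : C ⊗[k] Λ, LinearMap.lTensor C it (φ b) = LinearMap.lTensor C it b := by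
    refine proj_invariant φ hφcolin it fun b => ?_
    have h1 := LinearMap.congr_fun (hEvW it) (φ b)
    have h2 := LinearMap.congr_fun (hEvW it) b
    rw [LinearMap.comp_apply] at h1 h2
    rw [h1, h2]
    exact hφproj b
  have hgen0 : ∀ c : C, φ (c ⊗ₜ[k] (1 : Λ)) - c ⊗ₜ[k] 1 ∈ FF k C W 2 := by
    intro c
    refine mem_FF_two ?_ ?_
    · rw [map_sub, hq, sub_self]
    · rw [map_sub, hqW, sub_self]
  have hgen1 : ∀ w : W, φ ((1:C) ⊗ₜ[k] ExteriorAlgebra.ι k w)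
      - (1:C) ⊗ₜ[k] ExteriorAlgebra.ι k w ∈ FF k C W 2 := by
    intro w
    refine mem_FF_two ?_ ?_
    · rw [map_sub, hq, sub_self]
    · rw [map_sub, hqW, sub_self]
  have hφbij : Function.Bijective φ := phi_bijective hφmul hgen0 hgen1
  have hcomp : ⇑ψ = ⇑φ ∘ ⇑χ := funext fun a => (hφχ a).symm
  rw [hcomp]
  exact hφbij.comp hχbij
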